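/- Let T ∈ Λᵏ(ℝⁿ) be a constant exterior form and ψ₀ ∈ Δₙ a spinor annihilated by the holonomy algebra h*_T = [g*_T, g*_T], where g*_T ⊂ cl(ℝⁿ) is the Lie algebra generated by all elements X ⌟ T with X ∈ ℝⁿ. Then the spinor field ψ(m) := Exp(−m ⌟ T)·ψ₀ satisfies X(ψ) + (X ⌟ T)·ψ = 0 for all X ∈ ℝⁿ, i.e. it is ∇^T-parallel. -/

import Mathlib

/-!  The spinor module `Δₙ` is modelled as a complex Banach space `Δ` with
continuous endomorphisms `c i` (Clifford multiplication by the basis vectors of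
`ℝⁿ`) satisfying the Clifford relations.  A constant exterior `k`-form `T` on
`ℝⁿ` is encoded by its coefficients `a : Finset (Fin n) → ℝ` supported on sets
of cardinality `k`; Clifford multiplication by it is `cliffordOpL`, and
`interiorV X a` is the coefficient description of the interior product `X ⌟ T`. -/

open Finset
open scoped Nat

attribute [local instance 100] LieRing.ofAssociativeRing

/-- Clifford multiplication by the exterior form with coefficients `a`. -/
noncomputable def cliffordOpL {n : ℕ} {Δ : Type*} [NormedAddCommGroup Δ]
    [NormedSpace ℂ Δ] (c : Fin n → (Δ →L[ℂ] Δ)) (a : Finset (Fin n) → ℝ) :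
    Δ →L[ℂ] Δ :=
  ∑ s : Finset (Fin n), ((a s : ℝ) : ℂ) • ((s.sort (· ≤ ·)).map c).prod

/-- Interior product `X ⌟ T` in coefficients. -/
def interiorV {n : ℕ} (X : Fin n → ℝ) (a : Finset (Fin n) → ℝ) :
    Finset (Fin n) → ℝ :=
  fun s => ∑ m : Fin n,
    if m ∈ s then 0
    else (-1 : ℝ) ^ ((s.filter (· < m)).card) * X m * a (insert m s)

/-- The Lie algebra `g*_T ⊆ cl(ℝⁿ)`, generated by the elements `X ⌟ T`,
`X ∈ ℝⁿ`, acting on spinors. -/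
noncomputable def gStar {n : ℕ} {Δ : Type*} [NormedAddCommGroup Δ]
    [NormedSpace ℂ Δ] (c : Fin n → (Δ →L[ℂ] Δ)) (T : Finset (Fin n) → ℝ) :
    LieSubalgebra ℂ (Δ →L[ℂ] Δ) :=
  LieSubalgebra.lieSpan ℂ (Δ →L[ℂ] Δ)
    {z | ∃ X : Fin n → ℝ, z = cliffordOpL c (interiorV X T)}

/-- Naturality of the exponential with respect to an intertwining continuous
linear map. -/
lemma incl_exp_apply {W Δ : Type*} [NormedAddCommGroup W] [NormedSpace ℂ W] [CompleteSpace W]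
    [NormedAddCommGroup Δ] [NormedSpace ℂ Δ] [CompleteSpace Δ]
    (ι : W →L[ℂ] Δ) (f : Δ →L[ℂ] Δ) (f' : W →L[ℂ] W)
    (h : ∀ w, ι (f' w) = f (ι w)) (x : W) :
    ι (NormedSpace.exp f' x) = NormedSpace.exp f (ι x) := by
  have hpow : ∀ (k : ℕ) (w : W), ι ((f' ^ k) w) = (f ^ k) (ι w) := by
    intro k
    induction k with
    | zero => intro w; simp
    | succ k ih =>
      intro w
      rw [pow_succ, pow_succ, ContinuousLinearMap.mul_apply, ContinuousLinearMap.mul_apply, ih, h]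
  have hs : Summable fun n : ℕ => ((n ! : ℂ))⁻¹ • f' ^ n := NormedSpace.expSeries_summable' f'
  have hs2 : Summable fun n : ℕ => ((n ! : ℂ))⁻¹ • f ^ n := NormedSpace.expSeries_summable' f
  rw [NormedSpace.exp_eq_tsum (𝕂 := ℂ), NormedSpace.exp_eq_tsum (𝕂 := ℂ)]
  have e1 : ι ((∑' n : ℕ, ((n ! : ℂ))⁻¹ • f' ^ n) x)
      = ∑' n : ℕ, ι ((((n ! : ℂ))⁻¹ • f' ^ n) x) :=
    (ι.comp (ContinuousLinearMap.apply ℂ W x)).map_tsum hs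
  have e2 : (∑' n : ℕ, ((n ! : ℂ))⁻¹ • f ^ n) (ι x)
      = ∑' n : ℕ, (((n ! : ℂ))⁻¹ • f ^ n) (ι x) :=
    (ContinuousLinearMap.apply ℂ Δ (ι x)).map_tsum hs2
  rw [e1, e2]
  congr 1
  funext n
  simp only [ContinuousLinearMap.smul_apply, map_smul, hpow]

set_option synthInstance.maxHeartbeats 1000000 in
set_option maxHeartbeats 1000000 in
/-- Let `T` be a constant exterior `k`-form on `ℝⁿ` and
`ψ₀ ∈ Δₙ` a spinor annihilated by the holonomy algebra
`h*_T = [g*_T, g*_T]`.  Then the spinor field `ψ(m) = Exp(−m ⌟ T)·ψ₀`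
satisfies `X(ψ) + (X ⌟ T)·ψ = 0` for all `X ∈ ℝⁿ`, i.e. it is
`∇^T`-parallel. -/
theorem exp_spinor_field_parallel
    (n k : ℕ) (Δ : Type*) [NormedAddCommGroup Δ] [NormedSpace ℂ Δ]
    [CompleteSpace Δ]
    (c : Fin n → (Δ →L[ℂ] Δ))
    (hrel : ∀ i j : Fin n,
        c i * c j + c j * c i = if i = j then (-2 : ℂ) • 1 else 0)
    (T : Finset (Fin n) → ℝ) (hT : ∀ s, T s ≠ 0 → s.card = k)
    (ψ₀ : Δ)
    (hhol : ∀ a b : Δ →L[ℂ] Δ, a ∈ gStar c T → b ∈ gStar c T →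
        ⁅a, b⁆ ψ₀ = 0) :
    ∀ m X : EuclideanSpace ℝ (Fin n),
      fderiv ℝ (fun p : EuclideanSpace ℝ (Fin n) =>
          (NormedSpace.exp (-(cliffordOpL c (interiorV p T)))) ψ₀) m X
        + (cliffordOpL c (interiorV X T))
            ((NormedSpace.exp (-(cliffordOpL c (interiorV m T)))) ψ₀) = 0 := by
  classical
  -- linearity of the map `p ↦ cliffordOpL c (interiorV p T)`
  have hint_add : ∀ p q : Fin n → ℝ, interiorV (p + q) T = fun s => interiorV p T s + interiorV q T s := by
    intro p q
    funext s
    unfold interiorV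
    rw [← Finset.sum_add_distrib]
    refine Finset.sum_congr rfl fun m _ => ?_
    by_cases hm : m ∈ s
    · simp [hm]
    · simp only [hm, if_false, Pi.add_apply]
      ring
  have hint_smul : ∀ (r : ℝ) (p : Fin n → ℝ), interiorV (r • p) T = fun s => r * interiorV p T s := by
    intro r p
    funext s
    unfold interiorV
    rw [Finset.mul_sum]
    refine Finset.sum_congr rfl fun m _ => ?_
    by_cases hm : m ∈ s
    · simp [hm]
    · simp only [hm, if_false, Pi.smul_apply, smul_eq_mul]
      ring
  have hcl_add : ∀ a b : Finset (Fin n) → ℝ,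
      cliffordOpL c (fun s => a s + b s) = cliffordOpL c a + cliffordOpL c b := by
    intro a b
    unfold cliffordOpL
    rw [← Finset.sum_add_distrib]
    refine Finset.sum_congr rfl fun s _ => ?_
    push_cast
    rw [add_smul]
  have hcl_smul : ∀ (r : ℝ) (a : Finset (Fin n) → ℝ),
      cliffordOpL c (fun s => r * a s) = r • cliffordOpL c a := by
    intro r a
    unfold cliffordOpL
    rw [Finset.smul_sum]
    refine Finset.sum_congr rfl fun s _ => ?_
    push_cast
    rw [mul_smul, Complex.coe_smul]
  -- the continuous linear map `p ↦ cliffordOpL c (interiorV p T)`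
  let Bl : EuclideanSpace ℝ (Fin n) →ₗ[ℝ] (Δ →L[ℂ] Δ) :=
    { toFun := fun p => cliffordOpL c (interiorV p T)
      map_add' := fun p q => by
        show cliffordOpL c (interiorV ((p : Fin n → ℝ) + q) T) = _
        rw [hint_add, hcl_add]
      map_smul' := fun r p => by
        show cliffordOpL c (interiorV (r • (p : Fin n → ℝ)) T) = _
        rw [hint_smul, hcl_smul]
        rfl }
  let BL : EuclideanSpace ℝ (Fin n) →L[ℝ] (Δ →L[ℂ] Δ) := LinearMap.toContinuousLinearMap Bl
  have hBL : ∀ p : EuclideanSpace ℝ (Fin n), BL p = cliffordOpL c (interiorV p T) := fun p => rfl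
  have hB_gen : ∀ p : EuclideanSpace ℝ (Fin n), BL p ∈ gStar c T := fun p =>
    LieSubalgebra.subset_lieSpan ⟨p, rfl⟩
  -- the subspace annihilated by the holonomy algebra
  let W : Submodule ℂ Δ :=
    { carrier := {ψ | ∀ a b : Δ →L[ℂ] Δ, a ∈ gStar c T → b ∈ gStar c T → ⁅a, b⁆ ψ = 0}
      add_mem' := fun {x y} hx hy a b ha hb => by
        simp only [map_add, hx a b ha hb, hy a b ha hb, add_zero]
      zero_mem' := fun a b ha hb => map_zero _
      smul_mem' := fun r x hx a b ha hb => by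
        simp only [map_smul, hx a b ha hb, smul_zero] }
  have hWmem : ∀ ψ : Δ, ψ ∈ W ↔
      ∀ a b : Δ →L[ℂ] Δ, a ∈ gStar c T → b ∈ gStar c T → ⁅a, b⁆ ψ = 0 := fun ψ => Iff.rfl
  have hWclosed : IsClosed (W : Set Δ) := by
    have : (W : Set Δ) = ⋂ (a : Δ →L[ℂ] Δ) (b : Δ →L[ℂ] Δ) (_ : a ∈ gStar c T)
        (_ : b ∈ gStar c T), {ψ : Δ | ⁅a, b⁆ ψ = 0} := by
      ext ψ
      simp only [Set.mem_iInter, Set.mem_setOf_eq]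
      exact hWmem ψ
    rw [this]
    exact isClosed_iInter fun a => isClosed_iInter fun b => isClosed_iInter fun _ =>
      isClosed_iInter fun _ => isClosed_eq (⁅a, b⁆).continuous continuous_const
  haveI : CompleteSpace W := hWclosed.completeSpace_coe
  letI nr : NormedRing (W →L[ℂ] W) := ContinuousLinearMap.toNormedRing
  letI na : NormedAlgebra ℂ (W →L[ℂ] W) := ContinuousLinearMap.toNormedAlgebra
  letI tr : IsTopologicalRing (W →L[ℂ] W) := inferInstance
  letI ns : NormedSpace ℝ (W →L[ℂ] W) := inferInstance
  letI cs : ContinuousSMul ℝ (W →L[ℂ] W) := inferInstance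
  have hψ₀W : ψ₀ ∈ W := fun a b ha hb => hhol a b ha hb
  -- invariance of `W` under `gStar`
  have hWinv : ∀ g ∈ gStar c T, ∀ ψ ∈ W, g ψ ∈ W := by
    intro g hg ψ hψ a b ha hb
    have h1 : ⁅a, b⁆ ∈ gStar c T := (gStar c T).lie_mem ha hb
    have h2 : ⁅(⁅a, b⁆), g⁆ ψ = 0 := hψ ⁅a, b⁆ g h1 hg
    have h3 : ⁅a, b⁆ ψ = 0 := hψ a b ha hb
    have key : ⁅a, b⁆ (g ψ) = g (⁅a, b⁆ ψ) + ⁅(⁅a, b⁆), g⁆ ψ := by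
      simp only [Ring.lie_def, ContinuousLinearMap.sub_apply, ContinuousLinearMap.mul_apply,
        map_sub]
      abel
    rw [key, h3, h2, map_zero, add_zero]
  -- restriction of the operators to `W`
  let ι : W →L[ℂ] Δ := W.subtypeL
  let R : EuclideanSpace ℝ (Fin n) → (W →L[ℂ] W) := fun p =>
    ContinuousLinearMap.codRestrict ((BL p).comp ι) W
      (fun w => hWinv (BL p) (hB_gen p) w w.2)
  have hRι : ∀ (p : EuclideanSpace ℝ (Fin n)) (w : W), ι (R p w) = BL p (ι w) := fun p w => rfl
  have hRadd : ∀ p q : EuclideanSpace ℝ (Fin n), R (p + q) = R p + R q := by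
    intro p q
    ext w
    show BL (p + q) (ι w) = BL p (ι w) + BL q (ι w)
    rw [map_add, ContinuousLinearMap.add_apply]
  have hRsmul : ∀ (r : ℝ) (p : EuclideanSpace ℝ (Fin n)), R (r • p) = r • R p := by
    intro r p
    ext w
    show BL (r • p) (ι w) = r • (BL p (ι w))
    rw [map_smul, ContinuousLinearMap.smul_apply]
  have hRcomm : ∀ p q : EuclideanSpace ℝ (Fin n), Commute (R p) (R q) := by
    intro p q
    ext w
    show BL p (BL q (ι w)) = BL q (BL p (ι w))
    have hl : ⁅BL p, BL q⁆ (ι w) = 0 := w.2 (BL p) (BL q) (hB_gen p) (hB_gen q)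
    simp only [Ring.lie_def, ContinuousLinearMap.sub_apply, ContinuousLinearMap.mul_apply] at hl
    exact sub_eq_zero.mp hl
  set w₀ : W := ⟨ψ₀, hψ₀W⟩ with hw₀
  -- the continuous linear map `p ↦ -(R p)`
  let Rl : EuclideanSpace ℝ (Fin n) →ₗ[ℝ] (W →L[ℂ] W) :=
    { toFun := fun p => -(R p)
      map_add' := fun p q => by
        show -R (p + q) = -R p + -R q
        rw [hRadd]; abel
      map_smul' := fun r p => by
        show -R (r • p) = (RingHom.id ℝ) r • -R p
        rw [hRsmul]; simp }
  let RL : EuclideanSpace ℝ (Fin n) →L[ℝ] (W →L[ℂ] W) := LinearMap.toContinuousLinearMap Rl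
  have hRL : ∀ p, RL p = -(R p) := fun p => rfl
  -- naturality of exp
  have hnat : ∀ (p : EuclideanSpace ℝ (Fin n)) (w : W),
      ι (NormedSpace.exp (-(R p)) w) = NormedSpace.exp (-(BL p)) (ι w) := by
    intro p w
    refine incl_exp_apply ι (-(BL p)) (-(R p)) (fun v => ?_) w
    rw [ContinuousLinearMap.neg_apply, ContinuousLinearMap.neg_apply, map_neg, hRι]
  intro m X
  -- the function on `W`
  have hsplit : ∀ p : EuclideanSpace ℝ (Fin n),
      NormedSpace.exp (-(R p)) w₀
        = NormedSpace.exp (-(R m)) (NormedSpace.exp (-(R (p - m))) w₀) := by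
    intro p
    have h1 : -(R p) = -(R m) + -(R (p - m)) := by
      rw [← neg_add, ← hRadd]
      congr 1
      congr 1
      abel
    have h2 : Commute (-(R m)) (-(R (p - m))) := ((hRcomm m (p - m)).neg_left).neg_right
    letI : NormedAlgebra ℚ (W →L[ℂ] W) := NormedAlgebra.restrictScalars ℚ ℂ (W →L[ℂ] W)
    rw [h1, NormedSpace.exp_add_of_commute h2, ContinuousLinearMap.mul_apply]
  -- differentiability
  have hd0 : HasFDerivAt (fun q : EuclideanSpace ℝ (Fin n) =>
      NormedSpace.exp (RL q)) ((1 : (W →L[ℂ] W) →L[ℝ] (W →L[ℂ] W)).comp RL) 0 := by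
    have he : HasFDerivAt (NormedSpace.exp)
        ((1 : (W →L[ℂ] W) →L[ℂ] (W →L[ℂ] W)).restrictScalars ℝ) (RL 0) := by
      rw [map_zero]
      exact (hasFDerivAt_exp_zero).restrictScalars ℝ
    have := he.comp (0 : EuclideanSpace ℝ (Fin n)) RL.hasFDerivAt
    exact this
  -- evaluate at w₀
  let ev : (W →L[ℂ] W) →L[ℝ] W := (ContinuousLinearMap.apply ℂ W w₀).restrictScalars ℝ
  have hd1 : HasFDerivAt (fun q : EuclideanSpace ℝ (Fin n) => NormedSpace.exp (RL q) w₀)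
      (ev.comp ((1 : (W →L[ℂ] W) →L[ℝ] (W →L[ℂ] W)).comp RL)) 0 :=
    ev.hasFDerivAt.comp 0 hd0
  have hd1' : HasFDerivAt (fun q : EuclideanSpace ℝ (Fin n) => NormedSpace.exp (RL q) w₀)
      (ev.comp ((1 : (W →L[ℂ] W) →L[ℝ] (W →L[ℂ] W)).comp RL)) (m - m) := by
    rw [sub_self]; exact hd1
  have hsub : HasFDerivAt (fun p : EuclideanSpace ℝ (Fin n) => p - m)
      (ContinuousLinearMap.id ℝ (EuclideanSpace ℝ (Fin n))) m := (hasFDerivAt_id m).sub_const m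
  have hd2 : HasFDerivAt (fun p : EuclideanSpace ℝ (Fin n) => NormedSpace.exp (RL (p - m)) w₀)
      ((ev.comp ((1 : (W →L[ℂ] W) →L[ℝ] (W →L[ℂ] W)).comp RL)).comp
        (ContinuousLinearMap.id ℝ (EuclideanSpace ℝ (Fin n)))) m := by
    have h := HasFDerivAt.comp (f := fun p : EuclideanSpace ℝ (Fin n) => p - m) m hd1' hsub
    exact h
  let Em : W →L[ℝ] W := (NormedSpace.exp (-(R m))).restrictScalars ℝ
  have hd3 : HasFDerivAt
      (fun p : EuclideanSpace ℝ (Fin n) =>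
        NormedSpace.exp (-(R m)) (NormedSpace.exp (RL (p - m)) w₀))
      (Em.comp ((ev.comp ((1 : (W →L[ℂ] W) →L[ℝ] (W →L[ℂ] W)).comp RL)).comp
        (ContinuousLinearMap.id ℝ (EuclideanSpace ℝ (Fin n))))) m :=
    Em.hasFDerivAt.comp m hd2
  -- transfer to Δ
  let ιR : W →L[ℝ] Δ := ι.restrictScalars ℝ
  have hψι : ι w₀ = ψ₀ := rfl
  have hg : HasFDerivAt
      (fun p : EuclideanSpace ℝ (Fin n) =>
        NormedSpace.exp (-(cliffordOpL c (interiorV p T))) ψ₀)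
      (ιR.comp (Em.comp ((ev.comp ((1 : (W →L[ℂ] W) →L[ℝ] (W →L[ℂ] W)).comp RL)).comp
        (ContinuousLinearMap.id ℝ (EuclideanSpace ℝ (Fin n)))))) m := by
    have heq : (fun p : EuclideanSpace ℝ (Fin n) =>
        NormedSpace.exp (-(cliffordOpL c (interiorV p T))) ψ₀)
        = fun p : EuclideanSpace ℝ (Fin n) =>
          ι (NormedSpace.exp (-(R m)) (NormedSpace.exp (RL (p - m)) w₀)) := by
      funext p
      rw [hRL, ← hsplit p, hnat p w₀, hψι, hBL]
    rw [heq]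
    exact ιR.hasFDerivAt.comp m hd3
  rw [hg.fderiv]
  -- final computation
  have hval : (ιR.comp (Em.comp ((ev.comp ((1 : (W →L[ℂ] W) →L[ℝ] (W →L[ℂ] W)).comp RL)).comp
      (ContinuousLinearMap.id ℝ (EuclideanSpace ℝ (Fin n)))))) X
      = ι (NormedSpace.exp (-(R m)) (-(R X) w₀)) := by
    simp only [ContinuousLinearMap.comp_apply, ContinuousLinearMap.coe_id', id_eq,
      ContinuousLinearMap.one_apply, ContinuousLinearMap.coe_restrictScalars']
    rfl
  rw [hval]
  have hterm2 : (cliffordOpL c (interiorV X T))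
      ((NormedSpace.exp (-(cliffordOpL c (interiorV m T)))) ψ₀)
      = ι (R X (NormedSpace.exp (-(R m)) w₀)) := by
    rw [← hBL X, ← hBL m, ← hψι, ← hnat m w₀, hRι]
  rw [hterm2]
  have hc : Commute (NormedSpace.exp (-(R m))) (R X) :=
    Commute.exp_left ((hRcomm m X).neg_left)
  have hcomm_apply : NormedSpace.exp (-(R m)) (R X w₀)
      = R X (NormedSpace.exp (-(R m)) w₀) := by
    have h := congrArg (fun (f : W →L[ℂ] W) => f w₀) hc
    simpa only [ContinuousLinearMap.mul_apply] using h
  have hneg : NormedSpace.exp (-(R m)) (-(R X) w₀)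
      = -(R X (NormedSpace.exp (-(R m)) w₀)) := by
    rw [map_neg, hcomm_apply]
  rw [hneg, map_neg, neg_add_cancel]
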